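/- arXiv:1207.6488 — 2 statements merged into one kernel-verified Lean document; each statement's English description precedes it below -/
import Mathlib

section
/- For each integer n ≥ 2, let T_1, …, T_n be independent random variables with T_i exponentially distributed with rate i, and let K be an independent random index in {1, …, n−1} with P(K = k) = 2(n+1)/((n−1)(k+2)(k+1)); set τ^{(n)} = T_{K+1} + … + T_n. Then for every real y with 0 < y < 1, lim_{n→∞} n^y · E[exp(−y·τ^{(n)})] = ((1+y)/(1−y))·Γ(y+1). -/
open MeasureTheory ProbabilityTheory Filter Topology

section auxiliary

open Nat Real Set

private lemma exp_integral_Ioi' (c : ℝ) (hc : 0 < c) :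
    ∫ x in Ioi (0:ℝ), Real.exp (-(c * x)) = c⁻¹ := by
  have := integral_comp_mul_left_Ioi (fun u => Real.exp (-u)) 0 hc
  simp only [mul_zero, integral_exp_neg_Ioi_zero, smul_eq_mul, mul_one] at this
  exact this

private lemma exp_lintegral' (r y : ℝ) (hr : 0 < r) (hy : 0 < y) :
    ∫⁻ x, ENNReal.ofReal (Real.exp (-y * x)) ∂(expMeasure r)
      = ENNReal.ofReal (r / (r + y)) := by
  have hmeas : Measurable fun x : ℝ => ENNReal.ofReal (Real.exp (-y * x)) :=
    (measurable_id.const_mul (-y)).exp.ennreal_ofReal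
  have hpdfmeas : Measurable fun x => exponentialPDF r x :=
    (measurable_exponentialPDFReal r).ennreal_ofReal
  have h0 : expMeasure r = volume.withDensity (fun x => exponentialPDF r x) := rfl
  rw [h0, lintegral_withDensity_eq_lintegral_mul _ hpdfmeas hmeas]
  have hsplit : (∫⁻ x, ((fun x => exponentialPDF r x) * fun x => ENNReal.ofReal (Real.exp (-y * x))) x)
      = ∫⁻ x in Ici (0:ℝ), exponentialPDF r x * ENNReal.ofReal (Real.exp (-y * x)) := by
    simp only [Pi.mul_apply]
    rw [← lintegral_add_compl (μ := volume) (fun x => exponentialPDF r x * ENNReal.ofReal (Real.exp (-y * x))) (measurableSet_Ici (a := (0:ℝ)))]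
    have hz : ∫⁻ x in (Ici (0:ℝ))ᶜ, exponentialPDF r x * ENNReal.ofReal (Real.exp (-y * x)) = 0 := by
      rw [compl_Ici, lintegral_eq_zero_iff (f := fun x => exponentialPDF r x * ENNReal.ofReal (Real.exp (-y * x))) (hpdfmeas.mul hmeas)]
      filter_upwards [ae_restrict_mem measurableSet_Iio] with x hx
      rw [Pi.zero_apply, exponentialPDF_of_neg hx, zero_mul]
    rw [hz, add_zero]
  rw [hsplit]
  have hcongr : ∫⁻ x in Ici (0:ℝ), exponentialPDF r x * ENNReal.ofReal (Real.exp (-y * x))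
      = ∫⁻ x in Ici (0:ℝ), ENNReal.ofReal (r * Real.exp (-((r + y) * x))) := by
    refine setLIntegral_congr_fun measurableSet_Ici (fun x hx => ?_)
    beta_reduce
    rw [exponentialPDF_of_nonneg hx, ← ENNReal.ofReal_mul (by positivity)]
    congr 1
    rw [mul_assoc, ← Real.exp_add]
    ring_nf
  rw [hcongr]
  have hIoi : volume.restrict (Ici (0:ℝ)) = volume.restrict (Ioi (0:ℝ)) :=
    (Measure.restrict_congr_set Ioi_ae_eq_Ici).symm
  rw [hIoi, ← ofReal_integral_eq_lintegral_ofReal]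
  · rw [show (∫ x in Ioi (0:ℝ), r * Real.exp (-((r + y) * x))) = r * ∫ x in Ioi (0:ℝ), Real.exp (-((r+y) * x)) from integral_const_mul r _,
      exp_integral_Ioi' _ (by linarith), div_eq_mul_inv]
  · have h := ((exp_neg_integrableOn_Ioi 0 (by linarith : (0:ℝ) < r + y)).const_mul r)
    simp only [neg_mul] at h
    exact h
  · exact ae_of_all _ fun x => by positivity

private lemma exp_integrable_expMeasure' (r y : ℝ) (hr : 0 < r) (hy : 0 < y) :
    Integrable (fun x => Real.exp (-y * x)) (expMeasure r) := by
  refine ⟨((measurable_id.const_mul (-y)).exp).aestronglyMeasurable, ?_⟩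
  rw [hasFiniteIntegral_iff_ofReal (ae_of_all _ fun x => (Real.exp_pos _).le),
    exp_lintegral' r y hr hy]
  exact ENNReal.ofReal_lt_top

private lemma exp_integral_expMeasure' (r y : ℝ) (hr : 0 < r) (hy : 0 < y) :
    ∫ x, Real.exp (-y * x) ∂(expMeasure r) = r / (r + y) := by
  have hm : AEStronglyMeasurable (fun x : ℝ => Real.exp (-y * x)) (expMeasure r) :=
    ((measurable_id.const_mul (-y)).exp).aestronglyMeasurable
  rw [integral_eq_lintegral_of_nonneg_ae (ae_of_all _ fun x => (Real.exp_pos _).le) hm,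
    exp_lintegral' r y hr hy, ENNReal.toReal_ofReal (by positivity)]

private lemma sum_filter_fin' (n k : ℕ) (f : ℕ → ℝ) :
    ∑ j ∈ Finset.univ.filter (fun j : Fin n => k ≤ (j : ℕ)), f ((j : ℕ) + 1)
      = ∑ i ∈ Finset.Icc (k + 1) n, f i := by
  rw [← Finset.sum_image (g := fun j : Fin n => (j : ℕ) + 1)
    (by intro a _ b _ h; simp only [] at h; exact Fin.ext (by omega))]
  congr 1
  ext m
  simp only [Finset.mem_image, Finset.mem_filter, Finset.mem_univ, true_and, Finset.mem_Icc]
  constructor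
  · rintro ⟨j, hj, rfl⟩
    exact ⟨by omega, by have := j.isLt; omega⟩
  · rintro ⟨h1, h2⟩
    exact ⟨⟨m - 1, by omega⟩, by simp; omega, by simp; omega⟩

private lemma per_n' {Ω' : Type*} [MeasureSpace Ω'] [IsProbabilityMeasure (ℙ : Measure Ω')]
    (n : ℕ) (T : ℕ → Ω' → ℝ) (K : Ω' → ℕ)
    (hTmeas : ∀ i, Measurable (T i))
    (hTindep : iIndepFun T ℙ)
    (hTexp : ∀ i ∈ Finset.Icc 1 n, Measure.map (T i) ℙ = expMeasure i)
    (hKmeas : Measurable K)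
    (hKrange : ∀ ω, K ω ∈ Finset.Icc 1 (n - 1))
    (hKindep : IndepFun (fun ω (i : Fin n) => T (i + 1) ω) K ℙ)
    (y : ℝ) (hy0 : 0 < y) :
    ∫ ω, Real.exp (-y * ∑ i ∈ Finset.Icc (K ω + 1) n, T i ω) ∂ℙ
      = ∑ k ∈ Finset.Icc 1 (n - 1),
          (ℙ {ω | K ω = k}).toReal * ∏ i ∈ Finset.Icc (k + 1) n, ((i : ℝ) / ((i : ℝ) + y)) := by
  classical
  have hgemeas : StronglyMeasurable (fun x : ℝ => Real.exp (-y * x)) :=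
    ((measurable_id.const_mul (-y)).exp).stronglyMeasurable
  have hipos : ∀ i ∈ Finset.Icc 1 n, (0 : ℝ) < i := by
    intro i hi
    have := (Finset.mem_Icc.mp hi).1
    exact_mod_cast Nat.lt_of_lt_of_le Nat.zero_lt_one this
  have hint : ∀ i ∈ Finset.Icc 1 n, Integrable (fun ω => Real.exp (-y * T i ω)) ℙ := by
    intro i hi
    exact (integrable_map_measure hgemeas.aestronglyMeasurable
      (hTmeas i).aemeasurable).mp
      (by rw [hTexp i hi]; exact exp_integrable_expMeasure' i y (hipos i hi) hy0)
  have hmgf : ∀ i ∈ Finset.Icc 1 n, ∫ ω, Real.exp (-y * T i ω) ∂ℙ = (i : ℝ) / ((i : ℝ) + y) := by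
    intro i hi
    have h1 : ∫ x, Real.exp (-y * x) ∂(Measure.map (T i) ℙ) = ∫ ω, Real.exp (-y * T i ω) ∂ℙ :=
      integral_map (hTmeas i).aemeasurable hgemeas.aestronglyMeasurable
    rw [← h1, hTexp i hi, exp_integral_expMeasure' i y (hipos i hi) hy0]
  set g : ℕ → Ω' → ℝ := fun k ω => Real.exp (-y * ∑ i ∈ Finset.Icc (k + 1) n, T i ω) with hg
  have hsub : ∀ k : ℕ, Finset.Icc (k + 1) n ⊆ Finset.Icc 1 n := by
    intro k m hm
    rw [Finset.mem_Icc] at *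
    omega
  have hgint : ∀ k, Integrable (g k) ℙ := by
    intro k
    have := hTindep.integrable_exp_mul_sum (t := -y) hTmeas
      (s := Finset.Icc (k + 1) n) (fun i hi => hint i (hsub k hi))
    simp only [hg]
    simpa [Finset.sum_apply, neg_mul] using this
  have hgval : ∀ k, ∫ ω, g k ω ∂ℙ = ∏ i ∈ Finset.Icc (k + 1) n, ((i : ℝ) / ((i : ℝ) + y)) := by
    intro k
    have h1 : ∫ ω, g k ω ∂ℙ = mgf (∑ i ∈ Finset.Icc (k + 1) n, T i) ℙ (-y) := by
      unfold mgf
      congr 1 with ω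
      simp [hg, Finset.sum_apply]
    rw [h1, hTindep.mgf_sum hTmeas]
    exact Finset.prod_congr rfl fun i hi => hmgf i (hsub k hi)
  set χ : ℕ → Ω' → ℝ := fun k ω => if K ω = k then 1 else 0 with hχ
  have hχmeas : ∀ k, Measurable (χ k) := by
    intro k
    exact Measurable.ite (hKmeas (measurableSet_singleton k)) measurable_const measurable_const
  have hindep : ∀ k, IndepFun (g k) (χ k) ℙ := by
    intro k
    have hφ : Measurable (fun v : Fin n → ℝ =>
        Real.exp (-y * ∑ j ∈ Finset.univ.filter (fun j : Fin n => k ≤ (j : ℕ)), v j)) := by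
      apply Measurable.exp
      exact (Finset.measurable_sum _ fun j _ => measurable_pi_apply j).const_mul (-y)
    have hψ : Measurable (fun m : ℕ => if m = k then (1 : ℝ) else 0) := measurable_from_top
    have := hKindep.comp hφ hψ
    have hgeq : g k = (fun v : Fin n → ℝ =>
        Real.exp (-y * ∑ j ∈ Finset.univ.filter (fun j : Fin n => k ≤ (j : ℕ)), v j))
        ∘ (fun ω (i : Fin n) => T (i + 1) ω) := by
      funext ω
      simp only [hg, Function.comp_apply]
      rw [sum_filter_fin' n k (fun i => T i ω)]
    have hχeq : χ k = (fun m : ℕ => if m = k then (1 : ℝ) else 0) ∘ K := rfl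
    rw [hgeq, hχeq]
    exact this
  have hdecomp : ∀ ω, Real.exp (-y * ∑ i ∈ Finset.Icc (K ω + 1) n, T i ω)
      = ∑ k ∈ Finset.Icc 1 (n - 1), g k ω * χ k ω := by
    intro ω
    have : ∀ k, g k ω * χ k ω = if K ω = k then g k ω else 0 := by
      intro k
      simp only [hχ, mul_ite, mul_one, mul_zero]
    simp_rw [this]
    rw [Finset.sum_ite_eq (Finset.Icc 1 (n - 1)) (K ω) (fun k => g k ω), if_pos (hKrange ω)]
  calc ∫ ω, Real.exp (-y * ∑ i ∈ Finset.Icc (K ω + 1) n, T i ω) ∂ℙ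
      = ∫ ω, ∑ k ∈ Finset.Icc 1 (n - 1), g k ω * χ k ω ∂ℙ := by
        congr 1 with ω; exact hdecomp ω
    _ = ∑ k ∈ Finset.Icc 1 (n - 1), ∫ ω, g k ω * χ k ω ∂ℙ := by
        refine integral_finset_sum _ fun k _ => ?_
        refine ((hgint k).bdd_mul (c := 1) ((hχmeas k).aestronglyMeasurable) ?_).congr ?_
        · exact ae_of_all _ fun ω => by simp only [hχ]; split <;> simp
        · exact ae_of_all _ fun ω => mul_comm _ _
    _ = ∑ k ∈ Finset.Icc 1 (n - 1),
          (ℙ {ω | K ω = k}).toReal * ∏ i ∈ Finset.Icc (k + 1) n, ((i : ℝ) / ((i : ℝ) + y)) := by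
        refine Finset.sum_congr rfl fun k _ => ?_
        have hmul : ∫ ω, g k ω * χ k ω ∂ℙ = (∫ ω, g k ω ∂ℙ) * ∫ ω, χ k ω ∂ℙ :=
          (hindep k).integral_mul_eq_mul_integral (hgint k).aestronglyMeasurable
            (hχmeas k).aestronglyMeasurable
        have hχval : ∫ ω, χ k ω ∂ℙ = (ℙ {ω | K ω = k}).toReal := by
          have h2 : χ k = Set.indicator {ω | K ω = k} (1 : Ω' → ℝ) := by
            funext ω
            simp only [hχ, Set.indicator_apply, Set.mem_setOf_eq, Pi.one_apply]
          rw [h2]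
          exact integral_indicator_one
            (show MeasurableSet {ω | K ω = k} from hKmeas (measurableSet_singleton k))
        rw [hmul, hχval, hgval k, mul_comm]

private lemma Icc_prod_to_range' {M : Type*} [CommMonoid M] (f : ℕ → M) (n : ℕ) :
    ∏ i ∈ Finset.Icc 1 n, f i = ∏ j ∈ Finset.range n, f (j + 1) := by
  rw [← Finset.Ico_add_one_right_eq_Icc, Finset.prod_Ico_eq_prod_range]
  exact Finset.prod_congr (by simp) fun j _ => by rw [Nat.add_comm]

private lemma analysis_part' (y : ℝ) (hy0 : 0 < y) (hy1 : y < 1) :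
    Tendsto (fun n : ℕ => (n : ℝ) ^ y * ∑ k ∈ Finset.Icc 1 (n - 1),
        (2 * ((n : ℝ) + 1) / (((n : ℝ) - 1) * ((k : ℝ) + 2) * ((k : ℝ) + 1)))
          * ∏ i ∈ Finset.Icc (k + 1) n, ((i : ℝ) / ((i : ℝ) + y)))
      atTop (𝓝 ((1 + y) / (1 - y) * Real.Gamma (y + 1))) := by
  have h1y : (1 : ℝ) - y ≠ 0 := by linarith
  set b : ℕ → ℝ := fun k => ∏ i ∈ Finset.Icc 1 k, (((i : ℝ) + y) / i) with hbdef
  set Q : ℕ → ℝ := fun n => ∏ i ∈ Finset.Icc 1 n, ((i : ℝ) / ((i : ℝ) + y)) with hQdef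
  have hQb : ∀ k : ℕ, Q k * b k = 1 := by
    intro k
    rw [hQdef, hbdef, ← Finset.prod_mul_distrib]
    refine Finset.prod_eq_one fun i hi => ?_
    have h1 : (1 : ℕ) ≤ i := (Finset.mem_Icc.mp hi).1
    have hi0 : (0 : ℝ) < i := by exact_mod_cast h1
    field_simp
  have hprodc : ∀ k n : ℕ, k ≤ n →
      (∏ i ∈ Finset.Icc (k + 1) n, ((i : ℝ) / ((i : ℝ) + y))) = Q n * b k := by
    intro k n hkn
    have hsplit : (∏ i ∈ Finset.Icc 1 k, ((i : ℝ) / ((i : ℝ) + y)))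
        * (∏ i ∈ Finset.Icc (k + 1) n, ((i : ℝ) / ((i : ℝ) + y))) = Q n := by
      simp only [hQdef]
      have e1 : Finset.Icc 1 k = Finset.Ioc 0 k := rfl
      have e2 : Finset.Icc (k + 1) n = Finset.Ioc k n := by
        ext m; simp [Finset.mem_Icc, Finset.mem_Ioc]
      have e3 : Finset.Icc 1 n = Finset.Ioc 0 n := rfl
      rw [e1, e2, e3]
      exact Finset.prod_Ioc_consecutive _ (Nat.zero_le k) hkn
    have hQk : b k * (∏ i ∈ Finset.Icc 1 k, ((i : ℝ) / ((i : ℝ) + y))) = 1 := by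
      have := hQb k
      rw [hQdef] at this
      linarith [mul_comm (b k) (∏ i ∈ Finset.Icc 1 k, ((i : ℝ) / ((i : ℝ) + y)))]
    calc (∏ i ∈ Finset.Icc (k + 1) n, ((i : ℝ) / ((i : ℝ) + y)))
        = (b k * (∏ i ∈ Finset.Icc 1 k, ((i : ℝ) / ((i : ℝ) + y))))
          * (∏ i ∈ Finset.Icc (k + 1) n, ((i : ℝ) / ((i : ℝ) + y))) := by rw [hQk, one_mul]
      _ = b k * Q n := by rw [mul_assoc, hsplit]
      _ = Q n * b k := mul_comm _ _
  have htel : ∀ N : ℕ, ∑ k ∈ Finset.Icc 1 N, b k / (((k : ℝ) + 2) * ((k : ℝ) + 1))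
      = (1 + y) / (2 * (1 - y)) - b (N + 1) / ((1 - y) * ((N : ℝ) + 2)) := by
    intro N
    induction N with
    | zero =>
      simp only [Nat.cast_zero]
      rw [show Finset.Icc 1 0 = ∅ from rfl, Finset.sum_empty]
      have hb1 : b 1 = 1 + y := by
        simp [hbdef]
      rw [hb1]
      field_simp
      ring
    | succ N ih =>
      rw [Finset.sum_Icc_succ_top (by omega : 1 ≤ N + 1), ih]
      have hb2 : b (N + 1 + 1) = b (N + 1) * (((N : ℝ) + 2 + y) / ((N : ℝ) + 2)) := by
        simp only [hbdef]
        rw [Finset.prod_Icc_succ_top (by omega : 1 ≤ N + 1 + 1)]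
        push_cast
        ring
      rw [hb2]
      have hN2 : ((N : ℝ) + 2) ≠ 0 := by positivity
      have hN3 : ((N : ℝ) + 3) ≠ 0 := by positivity
      push_cast
      field_simp
      ring
  have hQG : ∀ n : ℕ, (n : ℝ) ^ y * Q n = y * Real.GammaSeq y n := by
    intro n
    have hden : ∀ i : ℕ, i ∈ Finset.Icc 1 n → ((i : ℝ) + y) ≠ 0 := by
      intro i hi
      have h1 : (1 : ℕ) ≤ i := (Finset.mem_Icc.mp hi).1
      have : (0 : ℝ) < i := by exact_mod_cast h1
      positivity
    have hfac : (∏ i ∈ Finset.Icc 1 n, (i : ℝ)) = (n ! : ℝ) := by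
      rw [Icc_prod_to_range' (fun i => (i : ℝ)) n, ← Finset.prod_range_add_one_eq_factorial]
      push_cast
      rfl
    have hrange : (∏ j ∈ Finset.range (n + 1), (y + (j : ℝ)))
        = y * ∏ i ∈ Finset.Icc 1 n, ((i : ℝ) + y) := by
      rw [Finset.prod_range_succ']
      simp only [Nat.cast_zero, add_zero]
      rw [mul_comm]
      congr 1
      rw [Icc_prod_to_range' (fun i => (i : ℝ) + y) n]
      exact Finset.prod_congr rfl fun j _ => by push_cast; ring
    have hQn : Q n = (n ! : ℝ) / ∏ i ∈ Finset.Icc 1 n, ((i : ℝ) + y) := by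
      simp only [hQdef]
      rw [Finset.prod_div_distrib, hfac]
    simp only [hQn, Real.GammaSeq, hrange]
    have hpne : (∏ i ∈ Finset.Icc 1 n, ((i : ℝ) + y)) ≠ 0 := Finset.prod_ne_zero_iff.mpr hden
    field_simp
  set F : ℕ → ℝ := fun n => (2 * ((n : ℝ) + 1) / ((n : ℝ) - 1)) *
      ((y * Real.GammaSeq y n) * ((1 + y) / (2 * (1 - y)))
        - (n : ℝ) ^ y / ((1 - y) * ((n : ℝ) + 1))) with hFdef
  have heq : F =ᶠ[atTop] fun n : ℕ => (n : ℝ) ^ y * ∑ k ∈ Finset.Icc 1 (n - 1),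
      (2 * ((n : ℝ) + 1) / (((n : ℝ) - 1) * ((k : ℝ) + 2) * ((k : ℝ) + 1)))
        * ∏ i ∈ Finset.Icc (k + 1) n, ((i : ℝ) / ((i : ℝ) + y)) := by
    filter_upwards [eventually_ge_atTop 2] with n hn
    have hn2 : (2 : ℝ) ≤ (n : ℝ) := by exact_mod_cast hn
    have hn1 : ((n : ℝ) - 1) ≠ 0 := by linarith
    have hsum : ∑ k ∈ Finset.Icc 1 (n - 1),
        (2 * ((n : ℝ) + 1) / (((n : ℝ) - 1) * ((k : ℝ) + 2) * ((k : ℝ) + 1)))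
          * ∏ i ∈ Finset.Icc (k + 1) n, ((i : ℝ) / ((i : ℝ) + y))
        = (2 * ((n : ℝ) + 1) / ((n : ℝ) - 1)) * Q n *
            ∑ k ∈ Finset.Icc 1 (n - 1), b k / (((k : ℝ) + 2) * ((k : ℝ) + 1)) := by
      rw [Finset.mul_sum]
      refine Finset.sum_congr rfl fun k hk => ?_
      rw [hprodc k n (by have := Finset.mem_Icc.mp hk; omega)]
      have hk2 : ((k : ℝ) + 2) ≠ 0 := by positivity
      have hk1 : ((k : ℝ) + 1) ≠ 0 := by positivity
      field_simp
    have hcast : (((n - 1 : ℕ) : ℝ)) = (n : ℝ) - 1 := by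
      have : (1 : ℕ) ≤ n := by omega
      push_cast [this]
      ring
    have hsucc : (n - 1) + 1 = n := by omega
    rw [hsum, htel (n - 1), hsucc, hcast]
    have e1 : (n : ℝ) ^ y * Q n = y * Real.GammaSeq y n := hQG n
    have e2 : Q n * b n = 1 := hQb n
    have hrw : (n : ℝ) - 1 + 2 = (n : ℝ) + 1 := by ring
    rw [hrw]
    have key : (n : ℝ) ^ y * (2 * ((n : ℝ) + 1) / ((n : ℝ) - 1) * Q n *
          ((1 + y) / (2 * (1 - y)) - b n / ((1 - y) * ((n : ℝ) + 1))))
        = 2 * ((n : ℝ) + 1) / ((n : ℝ) - 1) *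
            (((n : ℝ) ^ y * Q n) * ((1 + y) / (2 * (1 - y)))
              - ((n : ℝ) ^ y * (Q n * b n)) / ((1 - y) * ((n : ℝ) + 1))) := by ring
    rw [key, e1, e2, mul_one]
  have limA : Tendsto (fun n : ℕ => 2 * ((n : ℝ) + 1) / ((n : ℝ) - 1)) atTop (𝓝 2) := by
    have h0 : Tendsto (fun x : ℝ => x - 1) atTop atTop :=
      tendsto_atTop_add_const_right _ (-1) tendsto_id
    have h1 : Tendsto (fun x : ℝ => 2 + 4 * (x - 1)⁻¹) atTop (𝓝 (2 + 4 * 0)) :=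
      tendsto_const_nhds.add (h0.inv_tendsto_atTop.const_mul 4)
    have h2 : Tendsto (fun n : ℕ => 2 + 4 * ((n : ℝ) - 1)⁻¹) atTop (𝓝 2) := by
      simpa [Function.comp_def] using h1.comp tendsto_natCast_atTop_atTop
    refine Tendsto.congr' ?_ h2
    filter_upwards [eventually_ge_atTop 2] with n hn
    have hn2 : (2 : ℝ) ≤ (n : ℝ) := by exact_mod_cast hn
    have hn1 : ((n : ℝ) - 1) ≠ 0 := by linarith
    field_simp
    ring
  have limB : Tendsto (fun n : ℕ => y * Real.GammaSeq y n) atTop (𝓝 (Real.Gamma (y + 1))) := by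
    rw [Real.Gamma_add_one hy0.ne']
    exact (Real.GammaSeq_tendsto_Gamma y).const_mul y
  have limC : Tendsto (fun n : ℕ => (n : ℝ) ^ y / ((1 - y) * ((n : ℝ) + 1))) atTop (𝓝 0) := by
    have hpow : Tendsto (fun n : ℕ => (n : ℝ) ^ (y - 1)) atTop (𝓝 0) := by
      have := (tendsto_rpow_neg_atTop (by linarith : (0:ℝ) < 1 - y)).comp
        (tendsto_natCast_atTop_atTop (R := ℝ) : Tendsto (fun n : ℕ => (n : ℝ)) atTop atTop)
      simpa [neg_sub, Function.comp_def] using this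
    have hg : Tendsto (fun n : ℕ => (n : ℝ) ^ y / ((n : ℝ) + 1)) atTop (𝓝 0) := by
      refine squeeze_zero' ?_ ?_ hpow
      · filter_upwards with n
        positivity
      · filter_upwards [eventually_ge_atTop 1] with n hn
        have hn1 : (1 : ℝ) ≤ (n : ℝ) := by exact_mod_cast hn
        have hn0 : (0 : ℝ) < (n : ℝ) := by linarith
        rw [show y - 1 = y - (1:ℝ) from rfl, Real.rpow_sub hn0, Real.rpow_one]
        exact div_le_div_of_nonneg_left (Real.rpow_nonneg hn0.le y) hn0 (by linarith)
    have hfe : (fun n : ℕ => (n : ℝ) ^ y / ((1 - y) * ((n : ℝ) + 1)))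
        = fun n : ℕ => (1 - y)⁻¹ * ((n : ℝ) ^ y / ((n : ℝ) + 1)) := by
      funext n
      field_simp
    rw [hfe]
    simpa using hg.const_mul (1 - y)⁻¹
  have hlim : Tendsto F atTop
      (𝓝 (2 * (Real.Gamma (y + 1) * ((1 + y) / (2 * (1 - y))) - 0))) :=
    limA.mul ((limB.mul_const _).sub limC)
  have hval : 2 * (Real.Gamma (y + 1) * ((1 + y) / (2 * (1 - y))) - 0)
      = (1 + y) / (1 - y) * Real.Gamma (y + 1) := by
    field_simp
    ring
  rw [hval] at hlim
  exact Tendsto.congr' heq hlim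

end auxiliary

/-- For each `n ≥ 2` let `T_1, …, T_n` be independent exponentials of rates
`1, …, n` and `K` an independent index with
`P(K = k) = 2(n+1)/((n−1)(k+2)(k+1))` on `{1, …, n−1}`; set
`τ⁽ⁿ⁾ = T_{K+1} + … + T_n`.  Then for `0 < y < 1`,
`n^y · E[e^{−y·τ⁽ⁿ⁾}] → ((1+y)/(1−y)) Γ(y+1)` as `n → ∞`. -/
theorem statement10
    (Ω : ℕ → Type*) [∀ n, MeasureSpace (Ω n)]
    [∀ n, IsProbabilityMeasure (ℙ : Measure (Ω n))]
    (T : ∀ n, ℕ → Ω n → ℝ) (K : ∀ n, Ω n → ℕ)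
    (hTmeas : ∀ n i, Measurable (T n i))
    (hTindep : ∀ n, iIndepFun (T n) ℙ)
    (hTexp : ∀ n, ∀ i ∈ Finset.Icc 1 n, Measure.map (T n i) ℙ = expMeasure i)
    (hKmeas : ∀ n, Measurable (K n))
    (hKrange : ∀ n, 2 ≤ n → ∀ ω, K n ω ∈ Finset.Icc 1 (n - 1))
    (hKindep : ∀ n, IndepFun (fun ω (i : Fin n) => T n (i + 1) ω) (K n) ℙ)
    (hKdist : ∀ n, 2 ≤ n → ∀ k ∈ Finset.Icc 1 (n - 1),
      ℙ {ω | K n ω = k} = ENNReal.ofReal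
        (2 * ((n : ℝ) + 1) / (((n : ℝ) - 1) * ((k : ℝ) + 2) * ((k : ℝ) + 1))))
    (y : ℝ) (hy0 : 0 < y) (hy1 : y < 1) :
    Tendsto (fun n : ℕ =>
        (n : ℝ) ^ y *
          ∫ ω, Real.exp (-y * ∑ i ∈ Finset.Icc (K n ω + 1) n, T n i ω) ∂ℙ)
      atTop (nhds ((1 + y) / (1 - y) * Real.Gamma (y + 1))) := by
  refine Tendsto.congr' ?_ (analysis_part' y hy0 hy1)
  filter_upwards [eventually_ge_atTop 2] with n hn
  have hn2 : (2 : ℝ) ≤ (n : ℝ) := by exact_mod_cast hn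
  rw [per_n' n (T n) (K n) (hTmeas n) (hTindep n) (hTexp n) (hKmeas n)
    (hKrange n hn) (hKindep n) y hy0]
  congr 1
  refine Finset.sum_congr rfl fun k hk => ?_
  rw [hKdist n hn k hk, ENNReal.toReal_ofReal]
  exact div_nonneg (by positivity)
    (mul_nonneg (mul_nonneg (by linarith) (by positivity)) (by positivity))
end

section
/- Fix an integer n ≥ 2, reals α > 0 with α ≠ 1/2, and δ ∈ ℝ. Let T_1, …, T_n be independent random variables with T_i exponentially distributed with rate i, and let K be an independent random index in {1, …, n−1} with P(K = k) = 2(n+1)/((n−1)(k+2)(k+1)); set U_n = T_1 + … + T_n and τ^{(n)} = T_{K+1} + … + T_n. Then the interspecies correlation ρ_n := 1 − (1 − E[e^{−2α·τ^{(n)}}]) / (1 − E[e^{−2α·U_n}] + δ²·Var(e^{−α·U_n})) satisfies ρ_n = 1 − (2α(n−1) + (n+1)((1+2α)·b_{n,2α} − 1)) / ((n−1)(2α−1)(1 + (δ²−1)·b_{n,2α} − δ²·b_{n,α}²)). -/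
open MeasureTheory ProbabilityTheory

section Stmt18Aux

open Real Set

lemma stmt18_integrable_ind_exp {r b : ℝ} (hb : 0 < b) :
    Integrable (fun x => Set.indicator (Ici (0:ℝ)) (fun x => r * Real.exp (-(b * x))) x) := by
  refine (IntegrableOn.integrable_indicator ?_ measurableSet_Ici)
  rw [integrableOn_Ici_iff_integrableOn_Ioi]
  have := (exp_neg_integrableOn_Ioi 0 hb).const_mul r
  simpa [mul_comm, IntegrableOn] using this

lemma stmt18_integral_exp_neg_mul_Ioi {b : ℝ} (hb : 0 < b) :
    ∫ x in Ioi (0:ℝ), Real.exp (-(b * x)) = 1 / b := by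
  have h := integral_comp_mul_right_Ioi (fun x => Real.exp (-x)) 0 hb
  simp only [zero_mul, Real.exp_zero, integral_exp_neg_Ioi, neg_zero] at h
  rw [show (fun x => Real.exp (-(b * x))) = fun x => Real.exp (-(x * b)) by ext x; ring_nf]
  rw [h]
  simp [abs_of_pos hb, one_div]

lemma stmt18_lintegral_exp_expMeasure {r s : ℝ} (hr : 0 < r) (hs : 0 < s) :
    ∫⁻ x, ENNReal.ofReal (Real.exp (-(s * x))) ∂(expMeasure r)
      = ENNReal.ofReal (r / (s + r)) := by
  have hpdf : expMeasure r = volume.withDensity (exponentialPDF r) := rfl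
  rw [hpdf, lintegral_withDensity_eq_lintegral_mul volume
    (f := exponentialPDF r) ((measurable_exponentialPDFReal r).ennreal_ofReal)
    (by fun_prop)]
  have heq : ∀ x : ℝ, (exponentialPDF r x * ENNReal.ofReal (Real.exp (-(s * x))))
      = ENNReal.ofReal (Set.indicator (Ici (0:ℝ)) (fun x => r * Real.exp (-((r + s) * x))) x) := by
    intro x
    rw [exponentialPDF_eq, ← ENNReal.ofReal_mul (by positivity)]
    congr 1
    by_cases hx : 0 ≤ x
    · simp only [if_pos hx, Set.indicator_of_mem (Set.mem_Ici.mpr hx)]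
      rw [mul_assoc, ← Real.exp_add]
      ring_nf
    · rw [if_neg hx, Set.indicator_of_notMem (fun h => hx (Set.mem_Ici.mp h)), zero_mul]
  simp only [Pi.mul_apply]
  simp_rw [heq]
  rw [← ofReal_integral_eq_lintegral_ofReal (stmt18_integrable_ind_exp (by positivity))]
  · rw [integral_indicator measurableSet_Ici, integral_Ici_eq_integral_Ioi,
      integral_const_mul, stmt18_integral_exp_neg_mul_Ioi (by positivity)]
    rw [mul_one_div, add_comm s r]
  · filter_upwards with x
    apply Set.indicator_nonneg
    intro y _
    positivity

lemma stmt18_integrable_exp_neg_expMeasure {r s : ℝ} (hr : 0 < r) (hs : 0 < s) :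
    Integrable (fun x => Real.exp (-(s * x))) (expMeasure r) := by
  refine ⟨(Measurable.aestronglyMeasurable (((measurable_const_mul s).neg).exp)), ?_⟩
  rw [hasFiniteIntegral_iff_norm]
  have : ∀ x : ℝ, ENNReal.ofReal ‖Real.exp (-(s * x))‖ = ENNReal.ofReal (Real.exp (-(s * x))) := by
    intro x; rw [Real.norm_eq_abs, abs_of_nonneg (Real.exp_nonneg _)]
  simp_rw [this]
  rw [stmt18_lintegral_exp_expMeasure hr hs]
  exact ENNReal.ofReal_lt_top

lemma stmt18_integral_exp_neg_expMeasure {r s : ℝ} (hr : 0 < r) (hs : 0 < s) :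
    ∫ x, Real.exp (-(s * x)) ∂(expMeasure r) = r / (s + r) := by
  rw [integral_eq_lintegral_of_nonneg_ae (f := fun x => Real.exp (-(s * x)))
      (Filter.Eventually.of_forall fun x => Real.exp_nonneg _)
      ((((measurable_const_mul s).neg).exp : Measurable fun x : ℝ => Real.exp (-(s * x))).aestronglyMeasurable),
    stmt18_lintegral_exp_expMeasure hr hs, ENNReal.toReal_ofReal (by positivity)]

lemma stmt18_expMeasure_Iio_zero {r : ℝ} : expMeasure r (Iio 0) = 0 := by
  have h : expMeasure r = volume.withDensity (exponentialPDF r) := rfl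
  rw [h, withDensity_apply _ measurableSet_Iio]
  exact lintegral_exponentialPDF_of_nonpos le_rfl

variable {Ω : Type*} [MeasureSpace Ω] [IsProbabilityMeasure (ℙ : Measure Ω)]

lemma stmt18_mgf_single (n : ℕ) (T : ℕ → Ω → ℝ) (hTmeas : ∀ i, Measurable (T i))
    (hTexp : ∀ i ∈ Finset.Icc 1 n, Measure.map (T i) ℙ = expMeasure i)
    {i : ℕ} (hi : i ∈ Finset.Icc 1 n) {c : ℝ} (hc : 0 < c) :
    ∫ ω, Real.exp (-c * T i ω) ∂ℙ = (i : ℝ) / (c + i) := by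
  have hipos : (0:ℝ) < i := by
    have := (Finset.mem_Icc.mp hi).1; exact_mod_cast Nat.lt_of_lt_of_le Nat.zero_lt_one this
  have hmeas : AEStronglyMeasurable (fun x : ℝ => Real.exp (-(c * x))) (Measure.map (T i) ℙ) :=
    (((measurable_const_mul c).neg).exp).aestronglyMeasurable
  calc ∫ ω, Real.exp (-c * T i ω) ∂ℙ
      = ∫ x, Real.exp (-(c * x)) ∂(Measure.map (T i) ℙ) := by
        rw [integral_map (hTmeas i).aemeasurable hmeas]
        simp_rw [neg_mul]
    _ = (i : ℝ) / (c + i) := by rw [hTexp i hi, stmt18_integral_exp_neg_expMeasure hipos hc]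

lemma stmt18_integrable_single (n : ℕ) (T : ℕ → Ω → ℝ) (hTmeas : ∀ i, Measurable (T i))
    (hTexp : ∀ i ∈ Finset.Icc 1 n, Measure.map (T i) ℙ = expMeasure i)
    {i : ℕ} (hi : i ∈ Finset.Icc 1 n) {c : ℝ} (hc : 0 < c) :
    Integrable (fun ω => Real.exp (-c * T i ω)) ℙ := by
  have hipos : (0:ℝ) < i := by
    have := (Finset.mem_Icc.mp hi).1; exact_mod_cast Nat.lt_of_lt_of_le Nat.zero_lt_one this
  have hmeas : AEStronglyMeasurable (fun x : ℝ => Real.exp (-(c * x))) (Measure.map (T i) ℙ) :=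
    (((measurable_const_mul c).neg).exp).aestronglyMeasurable
  have := (integrable_map_measure hmeas (hTmeas i).aemeasurable).mp
    (by rw [hTexp i hi]; exact stmt18_integrable_exp_neg_expMeasure hipos hc)
  simpa [Function.comp_def, neg_mul] using this

lemma stmt18_integrable_sum (n : ℕ) (T : ℕ → Ω → ℝ) (hTmeas : ∀ i, Measurable (T i))
    (hTindep : iIndepFun T ℙ)
    (hTexp : ∀ i ∈ Finset.Icc 1 n, Measure.map (T i) ℙ = expMeasure i)
    {s : Finset ℕ} (hs : s ⊆ Finset.Icc 1 n) {c : ℝ} (hc : 0 < c) :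
    Integrable (fun ω => Real.exp (-c * ∑ i ∈ s, T i ω)) ℙ := by
  have h := hTindep.integrable_exp_mul_sum (t := -c) hTmeas (s := s)
    (fun i hi => by simpa [neg_mul] using stmt18_integrable_single n T hTmeas hTexp (hs hi) hc)
  simpa [Finset.sum_apply, neg_mul] using h

lemma stmt18_mgf_sum (n : ℕ) (T : ℕ → Ω → ℝ) (hTmeas : ∀ i, Measurable (T i))
    (hTindep : iIndepFun T ℙ)
    (hTexp : ∀ i ∈ Finset.Icc 1 n, Measure.map (T i) ℙ = expMeasure i)
    {s : Finset ℕ} (hs : s ⊆ Finset.Icc 1 n) {c : ℝ} (hc : 0 < c) :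
    ∫ ω, Real.exp (-c * ∑ i ∈ s, T i ω) ∂ℙ = ∏ i ∈ s, (i : ℝ) / (c + i) := by
  have h := hTindep.mgf_sum (t := -c) hTmeas s
  simp only [mgf, Finset.sum_apply] at h
  calc ∫ ω, Real.exp (-c * ∑ i ∈ s, T i ω) ∂ℙ
      = ∏ i ∈ s, ∫ ω, Real.exp (-c * T i ω) ∂ℙ := by
        simp_rw [neg_mul] at h ⊢; exact h
    _ = ∏ i ∈ s, (i : ℝ) / (c + i) :=
        Finset.prod_congr rfl fun i hi => stmt18_mgf_single n T hTmeas hTexp (hs hi) hc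

end Stmt18Aux

section Stmt18Algebra

open Finset

lemma stmt18_prod_split {n k : ℕ} (h2 : k ≤ n) (α : ℝ) :
    (∏ i ∈ Icc k n, (i : ℝ) / (2 * α + i))
      = ((k : ℝ) / (2 * α + k)) * ∏ i ∈ Icc (k + 1) n, (i : ℝ) / (2 * α + i) := by
  rw [Finset.Icc_add_one_left_eq_Ioc, ← Finset.Ioc_insert_left h2, Finset.prod_insert left_notMem_Ioc]

lemma stmt18_telescope (n : ℕ) (hn : 2 ≤ n) (α : ℝ) (hα : 0 < α) :
    ∑ k ∈ Icc 1 (n - 1), 2 * (2 * α - 1) / (((k : ℝ) + 2) * ((k : ℝ) + 1))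
        * ∏ i ∈ Icc (k + 1) n, (i : ℝ) / (2 * α + i)
      = 2 / ((n : ℝ) + 1) - (2 * α + 1) * ∏ i ∈ Icc 1 n, (i : ℝ) / (2 * α + i) := by
  set F : ℕ → ℝ := fun k => 2 * ((k : ℝ) + 2 * α + 1) / (((k : ℝ) + 1) * ((k : ℝ) + 2))
    * ∏ i ∈ Icc (k + 1) n, (i : ℝ) / (2 * α + i) with hF
  have hstep : ∀ j < n - 1, F (j + 1) - F j
      = 2 * (2 * α - 1) / ((((j:ℕ)+1 : ℝ) + 2) * (((j:ℕ)+1 : ℝ) + 1))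
        * ∏ i ∈ Icc (j + 1 + 1) n, (i : ℝ) / (2 * α + i) := by
    intro j hj
    have hkn : j + 1 ≤ n := by omega
    have hsplit := stmt18_prod_split (k := j + 1) (n := n) hkn α
    simp only [hF]
    rw [hsplit]
    have hx : (0:ℝ) ≤ (j:ℝ) := Nat.cast_nonneg j
    have h1 : ((j:ℝ) + 1) ≠ 0 := by nlinarith
    have h2 : ((j:ℝ) + 2) ≠ 0 := by nlinarith
    have h3 : ((j:ℝ) + 3) ≠ 0 := by nlinarith
    have h4 : (2 * α + ((j:ℕ)+1 : ℝ)) ≠ 0 := by nlinarith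
    push_cast at h4 ⊢
    field_simp
    ring
  have htel : ∑ j ∈ range (n - 1), (F (j + 1) - F j) = F (n - 1) - F 0 :=
    Finset.sum_range_sub F (n - 1)
  have hsum : ∑ k ∈ Icc 1 (n - 1), 2 * (2 * α - 1) / (((k : ℝ) + 2) * ((k : ℝ) + 1))
        * ∏ i ∈ Icc (k + 1) n, (i : ℝ) / (2 * α + i)
      = ∑ j ∈ range (n - 1), (F (j + 1) - F j) := by
    have hIcc : Icc 1 (n - 1) = Ico 1 n := by
      rw [← Finset.Ico_add_one_right_eq_Icc]; congr 1; omega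
    rw [hIcc, Finset.sum_Ico_eq_sum_range]
    refine Finset.sum_congr rfl fun j hj => ?_
    rw [Finset.mem_range] at hj
    rw [hstep j (by omega)]
    norm_num [Nat.add_comm 1 j]
  rw [hsum, htel]
  have hF0 : F 0 = (2 * α + 1) * ∏ i ∈ Icc 1 n, (i : ℝ) / (2 * α + i) := by
    simp only [hF]
    norm_num
  have hFn : F (n - 1) = 2 / ((n : ℝ) + 1) := by
    simp only [hF]
    have h1 : n - 1 + 1 = n := by omega
    rw [h1, Finset.Icc_self, Finset.prod_singleton]
    have hc : ((n - 1 : ℕ) : ℝ) = (n : ℝ) - 1 := by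
      push_cast [Nat.cast_sub (by omega : 1 ≤ n)]; ring
    rw [hc]
    have hn1 : (2:ℝ) ≤ (n:ℝ) := by exact_mod_cast hn
    have h0 : (0:ℝ) < (n:ℝ) := by linarith
    have hd : (((n:ℝ) - 1) + 1) * (((n:ℝ) - 1) + 2) * (2 * α + (n:ℝ)) ≠ 0 := by
      have e : (((n:ℝ) - 1) + 1) * (((n:ℝ) - 1) + 2) * (2 * α + (n:ℝ))
          = (n:ℝ) * ((n:ℝ) + 1) * (2 * α + (n:ℝ)) := by ring
      rw [e]; positivity
    rw [div_mul_div_comm, div_eq_div_iff hd (by positivity)]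
    ring
  rw [hF0, hFn]

end Stmt18Algebra

/-- Closed form of the interspecies correlation (Lemma 4 of the paper,
`α ≠ 1/2`): with `U_n = T_1 + … + T_n` and `τ⁽ⁿ⁾ = T_{K+1} + … + T_n`,
`ρ_n = 1 − (1 − E[e^{−2ατ⁽ⁿ⁾}])/(1 − E[e^{−2αU_n}] + δ² Var(e^{−αU_n}))`
equals
`1 − (2α(n−1) + (n+1)((1+2α) b_{n,2α} − 1)) / ((n−1)(2α−1)(1 + (δ²−1) b_{n,2α} − δ² b_{n,α}²))`,
where `b_{n,x} = ∏_{i=1}^n i/(x+i)`. -/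
theorem statement18 {Ω : Type*} [MeasureSpace Ω] [IsProbabilityMeasure (ℙ : Measure Ω)]
    (n : ℕ) (hn : 2 ≤ n) (α δ : ℝ) (hα : 0 < α) (hα2 : α ≠ 1 / 2)
    (T : ℕ → Ω → ℝ) (K : Ω → ℕ)
    (hTmeas : ∀ i, Measurable (T i))
    (hTindep : iIndepFun T ℙ)
    (hTexp : ∀ i ∈ Finset.Icc 1 n, Measure.map (T i) ℙ = expMeasure i)
    (hKmeas : Measurable K)
    (hKrange : ∀ ω, K ω ∈ Finset.Icc 1 (n - 1))
    (hKindep : IndepFun (fun ω (i : Fin n) => T (i + 1) ω) K ℙ)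
    (hKdist : ∀ k ∈ Finset.Icc 1 (n - 1),
      ℙ {ω | K ω = k} = ENNReal.ofReal
        (2 * ((n : ℝ) + 1) / (((n : ℝ) - 1) * ((k : ℝ) + 2) * ((k : ℝ) + 1)))) :
    1 - (1 - ∫ ω, Real.exp (-(2 * α) * ∑ i ∈ Finset.Icc (K ω + 1) n, T i ω) ∂ℙ)
        / (1 - (∫ ω, Real.exp (-(2 * α) * ∑ i ∈ Finset.Icc 1 n, T i ω) ∂ℙ)
            + δ ^ 2 * variance (fun ω => Real.exp (-α * ∑ i ∈ Finset.Icc 1 n, T i ω)) ℙ)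
      = 1 - (2 * α * ((n : ℝ) - 1)
            + ((n : ℝ) + 1) * ((1 + 2 * α) * (∏ i ∈ Finset.Icc 1 n, (i : ℝ) / (2 * α + i)) - 1))
          / (((n : ℝ) - 1) * (2 * α - 1)
            * (1 + (δ ^ 2 - 1) * (∏ i ∈ Finset.Icc 1 n, (i : ℝ) / (2 * α + i))
              - δ ^ 2 * (∏ i ∈ Finset.Icc 1 n, (i : ℝ) / (α + i)) ^ 2)) := by
  have hn1R : (2:ℝ) ≤ (n:ℝ) := by exact_mod_cast hn
  have hnm1 : (0:ℝ) < (n:ℝ) - 1 := by linarith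
  have h2α : (0:ℝ) < 2 * α := by linarith
  have h2α1 : 2 * α - 1 ≠ 0 := by
    intro h; apply hα2; linarith
  set b2 : ℝ := ∏ i ∈ Finset.Icc 1 n, (i : ℝ) / (2 * α + i) with hb2
  set a : ℝ := ∏ i ∈ Finset.Icc 1 n, (i : ℝ) / (α + i) with ha
  -- E[e^{-2α U_n}]
  have hU2 : ∫ ω, Real.exp (-(2 * α) * ∑ i ∈ Finset.Icc 1 n, T i ω) ∂ℙ = b2 :=
    stmt18_mgf_sum n T hTmeas hTindep hTexp (subset_refl _) h2α
  -- a.e. nonnegativity of the T i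
  have hTnn : ∀ i ∈ Finset.Icc 1 n, ∀ᵐ ω ∂ℙ, 0 ≤ T i ω := by
    intro i hi
    have h0 : ℙ (T i ⁻¹' Set.Iio 0) = 0 := by
      rw [← Measure.map_apply (hTmeas i) measurableSet_Iio, hTexp i hi]
      exact stmt18_expMeasure_Iio_zero
    have hset : {ω | ¬ 0 ≤ T i ω} = T i ⁻¹' (Set.Iio 0) := by ext ω; simp [not_le]
    rw [ae_iff, hset]; exact h0
  have hSnn : ∀ᵐ ω ∂ℙ, 0 ≤ ∑ i ∈ Finset.Icc 1 n, T i ω := by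
    have h : ∀ᵐ ω ∂ℙ, ∀ i : ℕ, i ∈ Finset.Icc 1 n → 0 ≤ T i ω := by
      refine ae_all_iff.mpr fun i => ?_
      by_cases hi : i ∈ Finset.Icc 1 n
      · exact (hTnn i hi).mono fun ω h _ => h
      · exact Filter.Eventually.of_forall fun ω hi' => absurd hi' hi
    filter_upwards [h] with ω hω
    exact Finset.sum_nonneg (fun i hi => hω i hi)
  -- variance
  have hYmeas : Measurable (fun ω => Real.exp (-α * ∑ i ∈ Finset.Icc 1 n, T i ω)) :=
    ((Finset.measurable_sum _ (fun i _ => hTmeas i)).const_mul (-α)).exp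
  have hYmem : MemLp (fun ω => Real.exp (-α * ∑ i ∈ Finset.Icc 1 n, T i ω)) 2 ℙ := by
    refine MemLp.of_bound hYmeas.aestronglyMeasurable 1 ?_
    filter_upwards [hSnn] with ω hω
    rw [Real.norm_eq_abs, abs_of_nonneg (Real.exp_nonneg _)]
    calc Real.exp (-α * ∑ i ∈ Finset.Icc 1 n, T i ω) ≤ Real.exp 0 := by
          apply Real.exp_le_exp.mpr; nlinarith
      _ = 1 := Real.exp_zero
  have hvar : variance (fun ω => Real.exp (-α * ∑ i ∈ Finset.Icc 1 n, T i ω)) ℙ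
      = b2 - a ^ 2 := by
    rw [variance_eq_sub hYmem]
    have hsq : ∫ ω, ((fun ω => Real.exp (-α * ∑ i ∈ Finset.Icc 1 n, T i ω)) ^ 2) ω ∂ℙ
        = ∫ ω, Real.exp (-(2 * α) * ∑ i ∈ Finset.Icc 1 n, T i ω) ∂ℙ := by
      refine integral_congr_ae (Filter.Eventually.of_forall fun ω => ?_)
      simp only [Pi.pow_apply]
      rw [pow_two, ← Real.exp_add]
      congr 1; ring
    have hE : ∫ ω, Real.exp (-α * ∑ i ∈ Finset.Icc 1 n, T i ω) ∂ℙ = a :=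
      stmt18_mgf_sum n T hTmeas hTindep hTexp (subset_refl _) hα
    rw [hsq, hU2, hE]
  -- the numerator: decompose over the values of K
  set g : ℕ → Ω → ℝ := fun k ω => Real.exp (-(2 * α) * ∑ i ∈ Finset.Icc (k + 1) n, T i ω)
    with hg
  have hgint : ∀ k ∈ Finset.Icc 1 (n - 1), Integrable (g k) ℙ := fun k hk =>
    stmt18_integrable_sum n T hTmeas hTindep hTexp
      (Finset.Icc_subset_Icc (by omega) le_rfl) h2α
  have hKset : ∀ k : ℕ, MeasurableSet {ω | K ω = k} :=
    fun k => hKmeas (measurableSet_singleton k)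
  have hpt : ∀ ω, Real.exp (-(2 * α) * ∑ i ∈ Finset.Icc (K ω + 1) n, T i ω)
      = ∑ k ∈ Finset.Icc 1 (n - 1), Set.indicator {ω' | K ω' = k} (g k) ω := by
    intro ω
    rw [Finset.sum_eq_single_of_mem (K ω) (hKrange ω)]
    · rw [Set.indicator_of_mem (by exact rfl : ω ∈ {ω' | K ω' = K ω})]
    · intro k _ hkne
      exact Set.indicator_of_notMem (fun h => hkne (h.symm)) _
  have hsplit : ∫ ω, Real.exp (-(2 * α) * ∑ i ∈ Finset.Icc (K ω + 1) n, T i ω) ∂ℙ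
      = ∑ k ∈ Finset.Icc 1 (n - 1), ∫ ω, Set.indicator {ω' | K ω' = k} (g k) ω ∂ℙ := by
    rw [show (fun ω => Real.exp (-(2 * α) * ∑ i ∈ Finset.Icc (K ω + 1) n, T i ω))
        = fun ω => ∑ k ∈ Finset.Icc 1 (n - 1), Set.indicator {ω' | K ω' = k} (g k) ω
      from funext hpt]
    exact integral_finset_sum _ (fun k hk => (hgint k hk).indicator (hKset k))
  -- each summand factorizes by independence
  have hterm : ∀ k ∈ Finset.Icc 1 (n - 1),
      ∫ ω, Set.indicator {ω' | K ω' = k} (g k) ω ∂ℙ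
        = (2 * ((n : ℝ) + 1) / (((n : ℝ) - 1) * ((k : ℝ) + 2) * ((k : ℝ) + 1)))
          * ∏ i ∈ Finset.Icc (k + 1) n, (i : ℝ) / (2 * α + i) := by
    intro k hk
    obtain ⟨hk1, hk2⟩ := Finset.mem_Icc.mp hk
    set φ : (Fin n → ℝ) → ℝ := fun v =>
      Real.exp (-(2 * α) * ∑ j : Fin n, if k ≤ (j : ℕ) then v j else 0) with hφdef
    set ψ : ℕ → ℝ := fun m => if m = k then 1 else 0 with hψdef
    have hφmeas : Measurable φ := by
      apply Measurable.exp
      apply Measurable.const_mul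
      exact Finset.measurable_sum _ (fun j _ => by
        by_cases h : k ≤ (j : ℕ)
        · simpa [h] using measurable_pi_apply j
        · simpa [h] using measurable_const)
    have hψmeas : Measurable ψ := measurable_from_top
    have hsum_eq : ∀ ω, (∑ j : Fin n, if k ≤ (j : ℕ) then T ((j : ℕ) + 1) ω else 0)
        = ∑ i ∈ Finset.Icc (k + 1) n, T i ω := by
      intro ω
      rw [Fin.sum_univ_eq_sum_range (fun m => if k ≤ m then T (m + 1) ω else 0) n]
      rw [← Finset.sum_filter]
      have hfil : (Finset.range n).filter (fun m => k ≤ m) = Finset.Ico k n := by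
        ext m; simp only [Finset.mem_filter, Finset.mem_range, Finset.mem_Ico]; omega
      rw [hfil, Finset.sum_Ico_add' (fun m => T m ω) k n 1, Finset.Ico_add_one_right_eq_Icc]
    have hcomp : Set.indicator {ω' | K ω' = k} (g k)
        = (fun ω => φ ((fun ω (i : Fin n) => T (i + 1) ω) ω))
          * (fun ω => ψ (K ω)) := by
      funext ω
      simp only [Pi.mul_apply, hφdef, hψdef, hg]
      by_cases hKω : K ω = k
      · simp [Set.indicator_apply, Set.mem_setOf_eq, hKω, hsum_eq ω]
      · simp [Set.indicator_apply, Set.mem_setOf_eq, hKω]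
    have hindep2 : IndepFun (fun ω => φ ((fun ω (i : Fin n) => T (i + 1) ω) ω))
        (fun ω => ψ (K ω)) ℙ := hKindep.comp hφmeas hψmeas
    have hφint : ∫ ω, φ ((fun ω (i : Fin n) => T (i + 1) ω) ω) ∂ℙ
        = ∏ i ∈ Finset.Icc (k + 1) n, (i : ℝ) / (2 * α + i) := by
      have : (fun ω => φ ((fun ω (i : Fin n) => T (i + 1) ω) ω))
          = fun ω => Real.exp (-(2 * α) * ∑ i ∈ Finset.Icc (k + 1) n, T i ω) := by
        funext ω
        simp only [hφdef]
        rw [hsum_eq ω]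
      rw [this]
      exact stmt18_mgf_sum n T hTmeas hTindep hTexp
        (Finset.Icc_subset_Icc (by omega) le_rfl) h2α
    have hψint : ∫ ω, ψ (K ω) ∂ℙ
        = 2 * ((n : ℝ) + 1) / (((n : ℝ) - 1) * ((k : ℝ) + 2) * ((k : ℝ) + 1)) := by
      have hψind : (fun ω => ψ (K ω))
          = Set.indicator {ω' | K ω' = k} (fun _ => (1:ℝ)) := by
        funext ω
        simp only [hψdef, Set.indicator_apply, Set.mem_setOf_eq]
      rw [hψind, integral_indicator_const (1:ℝ) (hKset k), smul_eq_mul, mul_one, measureReal_def,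
        hKdist k hk, ENNReal.toReal_ofReal]
      apply div_nonneg (by positivity)
      have : (0:ℝ) < ((n : ℝ) - 1) * ((k : ℝ) + 2) * ((k : ℝ) + 1) := by positivity
      linarith
    have hg_asm : AEStronglyMeasurable
        (fun ω => φ ((fun ω (i : Fin n) => T (i + 1) ω) ω)) ℙ := by
      refine (hφmeas.comp ?_).aestronglyMeasurable
      exact measurable_pi_lambda _ (fun i => hTmeas (i + 1))
    have hψ_asm : AEStronglyMeasurable (fun ω => ψ (K ω)) ℙ :=
      (hψmeas.comp hKmeas).aestronglyMeasurable
    rw [hcomp, hindep2.integral_mul_eq_mul_integral hg_asm hψ_asm, hφint, hψint, mul_comm]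
  -- putting the numerator together and the final algebra
  have hM : ∫ ω, Real.exp (-(2 * α) * ∑ i ∈ Finset.Icc (K ω + 1) n, T i ω) ∂ℙ
      = ∑ k ∈ Finset.Icc 1 (n - 1),
          (2 * ((n : ℝ) + 1) / (((n : ℝ) - 1) * ((k : ℝ) + 2) * ((k : ℝ) + 1)))
            * ∏ i ∈ Finset.Icc (k + 1) n, (i : ℝ) / (2 * α + i) := by
    rw [hsplit]
    exact Finset.sum_congr rfl hterm
  have hsum_val : ∑ k ∈ Finset.Icc 1 (n - 1),
        (2 * ((n : ℝ) + 1) / (((n : ℝ) - 1) * ((k : ℝ) + 2) * ((k : ℝ) + 1)))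
          * ∏ i ∈ Finset.Icc (k + 1) n, (i : ℝ) / (2 * α + i)
      = (((n:ℝ) + 1) / (((n:ℝ) - 1) * (2 * α - 1)))
          * (2 / ((n : ℝ) + 1) - (2 * α + 1) * b2) := by
    rw [← stmt18_telescope n hn α hα, Finset.mul_sum]
    refine Finset.sum_congr rfl fun k _ => ?_
    have hk1 : ((k:ℝ) + 1) ≠ 0 := by positivity
    have hk2 : ((k:ℝ) + 2) ≠ 0 := by positivity
    rw [← mul_assoc]
    congr 1
    field_simp
  set c : ℝ := ((n:ℝ) - 1) * (2 * α - 1) with hc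
  have hcne : c ≠ 0 := mul_ne_zero (ne_of_gt hnm1) h2α1
  have hnum : 2 * α * ((n : ℝ) - 1) + ((n : ℝ) + 1) * ((1 + 2 * α) * b2 - 1)
      = c * (1 - (((n:ℝ) + 1) / c) * (2 / ((n : ℝ) + 1) - (2 * α + 1) * b2)) := by
    have hnp1 : ((n:ℝ) + 1) ≠ 0 := by positivity
    field_simp
    ring
  rw [hU2, hvar, hM, hsum_val]
  have hDeq : 1 - b2 + δ ^ 2 * (b2 - a ^ 2) = 1 + (δ ^ 2 - 1) * b2 - δ ^ 2 * a ^ 2 := by ring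
  rw [hDeq, hnum]
  have hdiv : (((n:ℝ) + 1) / (((n:ℝ) - 1) * (2 * α - 1))) = (((n:ℝ) + 1) / c) := by rw [hc]
  rw [hdiv]
  congr 1
  rw [show ((n : ℝ) - 1) * (2 * α - 1)
      * (1 + (δ ^ 2 - 1) * b2 - δ ^ 2 * a ^ 2)
    = c * (1 + (δ ^ 2 - 1) * b2 - δ ^ 2 * a ^ 2) from by rw [hc]]
  rw [mul_div_mul_left _ _ hcne]
end
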